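/- arXiv:1302.5455 — 5 statements merged into one kernel-verified Lean document; each statement's English description precedes it below -/
import Mathlib

section
/- In the max-max diffusion model, the information value I'_m(u) at any node u after m propagation steps under the joint seeding with all seed sets ψ_1,…,ψ_K is at most the maximum over all singleton seedings (x,k) with x ∈ ψ_k of the information value I_m(u) at u after m steps under that singleton seeding. -/
open scoped NNReal

/-- Per-source information values in the max-max diffusion model (λ_d = λ_s = 0) with
threshold gating and no evacuation: at each step a node `v` whose overall information
value reaches its threshold `t v` propagates its per-source values, attenuated by the
edge trust `α v u`, to every node `u`; values are combined by taking maxima. -/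
noncomputable def mval {V : Type*} [Fintype V] {K : ℕ} (α : V → V → ℝ≥0) (t : V → ℝ≥0)
    (init : V → Fin K → ℝ≥0) : ℕ → V → Fin K → ℝ≥0
  | 0 => init
  | m + 1 => fun u k =>
      mval α t init m u k ⊔
        Finset.univ.sup fun v : V =>
          if t v ≤ Finset.univ.sup (fun k' => mval α t init m v k')
          then α v u * mval α t init m v k else 0

/-- Overall information value at node `u` after `m` steps: maximum over sources. -/
noncomputable def minfo {V : Type*} [Fintype V] {K : ℕ} (α : V → V → ℝ≥0) (t : V → ℝ≥0)
    (init : V → Fin K → ℝ≥0) (m : ℕ) (u : V) : ℝ≥0 :=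
  Finset.univ.sup fun k => mval α t init m u k

lemma minfo_le_succ {V : Type*} [Fintype V] {K : ℕ} (α : V → V → ℝ≥0) (t : V → ℝ≥0)
    (init : V → Fin K → ℝ≥0) (m : ℕ) (u : V) :
    minfo α t init m u ≤ minfo α t init (m + 1) u := by
  apply Finset.sup_mono_fun
  intro k _
  show mval α t init m u k ≤ mval α t init (m+1) u k
  rw [mval]
  exact le_sup_left

lemma minfo_succ_ge {V : Type*} [Fintype V] {K : ℕ} (α : V → V → ℝ≥0) (t : V → ℝ≥0)
    (init : V → Fin K → ℝ≥0) (m : ℕ) (u v : V) (h : t v ≤ minfo α t init m v) :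
    α v u * minfo α t init m v ≤ minfo α t init (m + 1) u := by
  have h' : t v ≤ Finset.univ.sup (fun k' => mval α t init m v k') := h
  rw [minfo, NNReal.mul_finset_sup]
  apply Finset.sup_le
  intro k _
  calc α v u * mval α t init m v k
      ≤ mval α t init (m+1) u k := by
        rw [mval]
        refine le_sup_of_le_right ?_
        have hle := Finset.le_sup (f := fun w : V =>
          if t w ≤ Finset.univ.sup (fun k' => mval α t init m w k')
          then α w u * mval α t init m w k else 0) (Finset.mem_univ v)
        simp only [if_pos h'] at hle
        exact hle
    _ ≤ minfo α t init (m+1) u := Finset.le_sup (Finset.mem_univ k)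

lemma minfo_succ_le {V : Type*} [Fintype V] {K : ℕ} (α : V → V → ℝ≥0) (t : V → ℝ≥0)
    (init : V → Fin K → ℝ≥0) (m : ℕ) (u : V) :
    minfo α t init (m + 1) u ≤ minfo α t init m u ⊔
      Finset.univ.sup (fun v => if t v ≤ minfo α t init m v
        then α v u * minfo α t init m v else 0) := by
  simp only [minfo]
  apply Finset.sup_le
  intro k _
  show mval α t init (m+1) u k ≤ _
  rw [mval]
  apply sup_le_sup (Finset.le_sup (Finset.mem_univ k))
  apply Finset.sup_mono_fun
  intro v _
  split_ifs with h
  · exact le_trans (mul_le_mul_right (Finset.le_sup (f := fun k => mval α t init m v k) (Finset.mem_univ k)) _) (le_of_eq (if_pos h).symm)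
  · exact zero_le

/-- In the max-max model, the information value at any node `u` after `m` steps under the
joint seeding with all seed sets `ψ 1, …, ψ K` is at most the maximum, over all singleton
seedings `(x,k)` with `x ∈ ψ k`, of the information value at `u` after `m` steps under
that singleton seeding. -/
theorem joint_le_sup_singleton {V : Type*} [Fintype V] [DecidableEq V] {K : ℕ}
    (α : V → V → ℝ≥0) (t : V → ℝ≥0) (I : Fin K → ℝ≥0) (β : Fin K → V → ℝ≥0)
    (hα : ∀ u v, α u v ≤ 1) (hβ : ∀ k u, β k u ≤ 1)
    (ψ : Fin K → Finset V) :
    ∀ (m : ℕ) (u : V),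
      minfo α t (fun u j => if u ∈ ψ j then β j u * I j else 0) m u ≤
      Finset.univ.sup fun k : Fin K =>
        (ψ k).sup fun x =>
          minfo α t (fun u j => if u = x ∧ j = k then β k x * I k else 0) m u := by
  set initJ : V → Fin K → ℝ≥0 := fun u j => if u ∈ ψ j then β j u * I j else 0 with hJ
  set initS : Fin K → V → V → Fin K → ℝ≥0 :=
    fun k x u j => if u = x ∧ j = k then β k x * I k else 0 with hS
  intro m
  induction m with
  | zero =>
    intro u
    apply Finset.sup_le
    intro j _
    show initJ u j ≤ _
    rw [hJ]
    simp only []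
    split_ifs with hu
    · have h1 : β j u * I j ≤ minfo α t (initS j u) 0 u := by
        calc β j u * I j = mval α t (initS j u) 0 u j := by
              show _ = initS j u u j
              rw [hS]; simp
          _ ≤ _ := Finset.le_sup (Finset.mem_univ j)
      refine h1.trans ?_
      refine le_trans (Finset.le_sup (f := fun x => minfo α t (initS j x) 0 u) hu) ?_
      exact Finset.le_sup (f := fun k : Fin K => (ψ k).sup fun x => minfo α t (initS k x) 0 u)
        (Finset.mem_univ j)
    · exact zero_le
  | succ m ih =>
    intro u
    refine le_trans (minfo_succ_le α t initJ m u) ?_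
    apply sup_le
    · refine (ih u).trans ?_
      apply Finset.sup_mono_fun; intro k _
      apply Finset.sup_mono_fun; intro x _
      exact minfo_le_succ α t (initS k x) m u
    · apply Finset.sup_le
      intro v _
      split_ifs with hg
      · have h1 : minfo α t initJ m v ≤
            Finset.univ.sup (fun k : Fin K => (ψ k).sup fun x => minfo α t (initS k x) m v) :=
          ih v
        set Sv := Finset.univ.sup (fun k : Fin K => (ψ k).sup fun x => minfo α t (initS k x) m v)
          with hSv
        have htv : t v ≤ Sv := hg.trans h1
        have key : α v u * Sv ≤
            Finset.univ.sup (fun k : Fin K =>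
              (ψ k).sup fun x => minfo α t (initS k x) (m+1) u) := by
          rcases eq_or_ne Sv 0 with h0 | h0
          · rw [h0, mul_zero]; exact zero_le
          · have hK : (Finset.univ : Finset (Fin K)).Nonempty := by
              rcases (Finset.univ : Finset (Fin K)).eq_empty_or_nonempty with he | hne
              · exfalso; apply h0; rw [hSv, he, Finset.sup_empty]; rfl
              · exact hne
            obtain ⟨k0, _, hk0⟩ := Finset.exists_mem_eq_sup Finset.univ hK
              (fun k : Fin K => (ψ k).sup fun x => minfo α t (initS k x) m v)
            have hψ : (ψ k0).Nonempty := by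
              rw [Finset.nonempty_iff_ne_empty]
              intro he
              apply h0
              rw [hSv, hk0, he, Finset.sup_empty]
              rfl
            obtain ⟨x0, hx0, hx0eq⟩ := Finset.exists_mem_eq_sup (ψ k0) hψ
              (fun x => minfo α t (initS k0 x) m v)
            have hSeq : Sv = minfo α t (initS k0 x0) m v := by rw [hSv, hk0, hx0eq]
            rw [hSeq]
            have hkey := minfo_succ_ge α t (initS k0 x0) m u v (by rw [← hSeq]; exact htv)
            refine hkey.trans ?_
            refine le_trans (Finset.le_sup (f := fun x => minfo α t (initS k0 x) (m+1) u) hx0) ?_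
            exact Finset.le_sup (f := fun k : Fin K =>
              (ψ k).sup fun x => minfo α t (initS k x) (m+1) u) (Finset.mem_univ k0)
        exact le_trans (mul_le_mul_right h1 _) key
      · exact zero_le
end

section
/- In the max-max diffusion model, if all K sources have the same information value I and every node trusts all sources equally (α(k,u) is independent of k), then seeding the K sources with sets ψ_1,…,ψ_K yields the same final converted (Believed) set as seeding a single source of value I with the set ψ = ψ_1 ∪ ⋯ ∪ ψ_K. -/
open scoped NNReal

/-- In the max-max model, if all `K` sources have the same information value `I` and every
node `u` trusts all sources equally (trust `β u`, independent of the source), then seeding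
the `K` sources with sets `ψ 1, …, ψ K` yields the same final converted (Believed) set as
seeding a single source of value `I` with the union `ψ 1 ∪ ⋯ ∪ ψ K`. -/
theorem identical_sources_eq_single_source {V : Type*} [Fintype V] [DecidableEq V] {K : ℕ}
    (α : V → V → ℝ≥0) (t : V → ℝ≥0) (I : ℝ≥0) (β : V → ℝ≥0)
    (hα : ∀ u v, α u v ≤ 1) (hβ : ∀ u, β u ≤ 1)
    (ψ : Fin K → Finset V) :
    {u : V | ∃ m : ℕ,
        t u ≤ minfo α t (fun u (j : Fin K) => if u ∈ ψ j then β u * I else 0) m u} =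
    {u : V | ∃ m : ℕ,
        t u ≤ minfo α t
          (fun u (_ : Fin 1) => if u ∈ Finset.univ.biUnion ψ then β u * I else 0) m u} := by
  set f : V → Fin K → ℝ≥0 := fun u j => if u ∈ ψ j then β u * I else 0 with hf
  set g : V → Fin 1 → ℝ≥0 :=
    fun u _ => if u ∈ Finset.univ.biUnion ψ then β u * I else 0 with hg
  have key : ∀ m u,
      (Finset.univ.sup fun k => mval α t f m u k) = mval α t g m u 0 := by
    intro m
    induction m with
    | zero =>
      intro u
      show (Finset.univ.sup fun k => f u k) = g u 0
      by_cases h : u ∈ Finset.univ.biUnion ψ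
      · have hg0 : g u 0 = β u * I := if_pos h
        obtain ⟨j, -, hj⟩ := Finset.mem_biUnion.mp h
        rw [hg0]
        refine le_antisymm (Finset.sup_le fun k _ => ?_) ?_
        · show (if u ∈ ψ k then β u * I else 0) ≤ β u * I
          split
          · exact le_rfl
          · exact zero_le
        · have hfj : f u j = β u * I := if_pos hj
          calc β u * I = f u j := hfj.symm
            _ ≤ _ := Finset.le_sup (Finset.mem_univ j)
      · have hg0 : g u 0 = 0 := if_neg h
        have hf0 : ∀ k, f u k = 0 := by
          intro k
          have hk : u ∉ ψ k := fun hk => h (Finset.mem_biUnion.mpr ⟨k, Finset.mem_univ k, hk⟩)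
          exact if_neg hk
        rw [hg0]
        exact le_antisymm (Finset.sup_le fun k _ => (hf0 k).le) zero_le
    | succ m ih =>
      intro u
      simp only [mval]
      rw [show (fun k => mval α t f m u k ⊔
            Finset.univ.sup fun v : V =>
              if t v ≤ Finset.univ.sup (fun k' => mval α t f m v k')
              then α v u * mval α t f m v k else 0)
          = ((fun k => mval α t f m u k) ⊔ (fun k =>
            Finset.univ.sup fun v : V =>
              if t v ≤ Finset.univ.sup (fun k' => mval α t f m v k')
              then α v u * mval α t f m v k else 0)) from rfl,
        Finset.sup_sup, ih u]
      congr 1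
      rw [Finset.sup_comm]
      refine Finset.sup_congr rfl fun v _ => ?_
      have hc : (t v ≤ Finset.univ.sup fun k' => mval α t f m v k')
          ↔ (t v ≤ Finset.univ.sup fun k' : Fin 1 => mval α t g m v k') := by
        rw [ih v]
        constructor <;> intro h
        · exact h.trans (Finset.le_sup (Finset.mem_univ (0 : Fin 1)))
        · refine h.trans (Finset.sup_le fun k _ => ?_)
          have : k = 0 := Subsingleton.elim _ _
          simp [this]
      by_cases h : t v ≤ Finset.univ.sup fun k' => mval α t f m v k'
      · rw [if_pos (hc.mp h)]
        simp only [if_pos h]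
        rw [← NNReal.mul_finset_sup, ih v]
      · rw [if_neg (fun h' => h (hc.mpr h'))]
        simp only [if_neg h]
        simp
  ext u
  simp only [Set.mem_setOf_eq, minfo]
  constructor <;> rintro ⟨m, hm⟩ <;> refine ⟨m, ?_⟩
  · refine (hm.trans ?_)
    rw [key m u]
    exact Finset.le_sup (Finset.mem_univ (0 : Fin 1))
  · refine hm.trans (Finset.sup_le fun k _ => ?_)
    have hk : k = 0 := Subsingleton.elim _ _
    subst hk
    rw [← key m u]
end

section
/- The greedy algorithm applied to the coverage function F(S) = |⋃_{(x,k) ∈ S} γ(x,k)| under a partition matroid constraint (at most B_k pairs with second coordinate k, for each k) produces a set S_greedy with F(S_greedy) ≥ (1/2) · max{F(S) : S satisfies the partition constraint}. -/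
/-- The coverage set function on (node, source) pairs:
`F(S) = |⋃_{(x,k) ∈ S} γ(x,k)|`. -/
def pairCoverage {V : Type*} [DecidableEq V] {K : ℕ}
    (γ : V → Fin K → Finset V) (S : Finset (V × Fin K)) : ℕ :=
  (S.biUnion fun p => γ p.1 p.2).card

/-- Independence in the partition matroid: at most `B k` pairs with second coordinate `k`. -/
def partitionIndep {V : Type*} [DecidableEq V] {K : ℕ}
    (B : Fin K → ℕ) (S : Finset (V × Fin K)) : Prop :=
  ∀ k : Fin K, (S.filter fun p => p.2 = k).card ≤ B k

/-- Greedy under a partition matroid constraint for the coverage function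
`F(S) = |⋃_{(x,k) ∈ S} γ(x,k)|`: starting from the empty set and, at each of `∑_k B_k`
steps, adding a feasible pair maximizing the marginal gain, the resulting set satisfies
`F(S_greedy) ≥ (1/2) · max {F(T) : T independent in the partition matroid}`. -/
theorem greedy_partition_matroid_approx {V : Type*} [Fintype V] [DecidableEq V] {K : ℕ}
    (γ : V → Fin K → Finset V) (B : Fin K → ℕ) (s : ℕ → Finset (V × Fin K))
    (h0 : s 0 = ∅)
    (hstep : ∀ i < ∑ k : Fin K, B k, ∃ e : V × Fin K,
      partitionIndep B (insert e (s i)) ∧ s (i + 1) = insert e (s i) ∧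
      ∀ e' : V × Fin K, partitionIndep B (insert e' (s i)) →
        pairCoverage γ (insert e' (s i)) ≤ pairCoverage γ (insert e (s i))) :
    ∀ T : Finset (V × Fin K), partitionIndep B T →
      pairCoverage γ T ≤ 2 * pairCoverage γ (s (∑ k : Fin K, B k)) := by
  classical
  intro T hT
  set n := ∑ k : Fin K, B k with hn
  -- the union covered by a set of pairs
  set U : Finset (V × Fin K) → Finset V := fun S => S.biUnion fun p => γ p.1 p.2 with hU
  have hUmono : ∀ {S S' : Finset (V × Fin K)}, S ⊆ S' → U S ⊆ U S' := by
    intro S S' h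
    exact Finset.biUnion_subset_biUnion_of_subset_left _ h
  -- marginal gain of a pair
  set marg : (V × Fin K) → Finset (V × Fin K) → ℕ :=
    fun e S => (γ e.1 e.2 \ U S).card with hmarg
  have hins : ∀ (e : V × Fin K) (S : Finset (V × Fin K)),
      pairCoverage γ (insert e S) = pairCoverage γ S + marg e S := by
    intro e S
    have h1 : U (insert e S) = γ e.1 e.2 ∪ U S := Finset.biUnion_insert
    show (U (insert e S)).card = (U S).card + (γ e.1 e.2 \ U S).card
    rw [h1, ← Finset.card_sdiff_add_card, Nat.add_comm]
  -- chain facts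
  have ssub : ∀ i < n, s i ⊆ s (i + 1) := by
    intro i hi
    obtain ⟨e, _, hse, _⟩ := hstep i hi
    rw [hse]; exact Finset.subset_insert _ _
  have hmono : ∀ i j, i ≤ j → j ≤ n → s i ⊆ s j := by
    intro i j hij hjn
    induction j with
    | zero => simp [Nat.le_zero.mp hij]
    | succ m ih =>
      rcases Nat.lt_or_ge i (m + 1) with h | h
      · exact (ih (Nat.lt_succ_iff.mp h) (Nat.le_of_succ_le hjn)).trans
          (ssub m (Nat.lt_of_lt_of_le (Nat.lt_succ_self m) hjn))
      · have : i = m + 1 := le_antisymm hij h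
        simp [this]
  have hindep : ∀ i ≤ n, partitionIndep B (s i) := by
    intro i hi
    induction i with
    | zero => intro k; simp [h0]
    | succ m ih =>
      obtain ⟨e, he1, he2, _⟩ := hstep m (Nat.lt_of_succ_le hi)
      rw [he2]; exact he1
  have hcard : ∀ i ≤ n, (s i).card ≤ i := by
    intro i hi
    induction i with
    | zero => simp [h0]
    | succ m ih =>
      obtain ⟨e, _, he2, _⟩ := hstep m (Nat.lt_of_succ_le hi)
      rw [he2]
      exact le_trans (Finset.card_insert_le _ _)
        (Nat.succ_le_succ (ih (Nat.le_of_succ_le hi)))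
  -- per-step gain
  set δ : ℕ → ℕ := fun i => (U (s (i + 1)) \ U (s i)).card with hδdef
  have hδ : ∀ i < n, pairCoverage γ (s (i + 1)) = pairCoverage γ (s i) + δ i := by
    intro i hi
    have h1 : U (s i) ⊆ U (s (i + 1)) := hUmono (ssub i hi)
    show (U (s (i + 1))).card = (U (s i)).card + (U (s (i + 1)) \ U (s i)).card
    exact ((Nat.add_comm _ _).trans (Finset.card_sdiff_add_card_eq_card h1)).symm
  -- telescoping
  have htel : ∀ m ≤ n, pairCoverage γ (s m) = ∑ i ∈ Finset.range m, δ i := by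
    intro m hm
    induction m with
    | zero => simp [pairCoverage, h0]
    | succ j ih =>
      rw [hδ j (Nat.lt_of_succ_le hm), ih (Nat.le_of_succ_le hm),
        Finset.sum_range_succ]
  -- greedy dominance
  have hgreedy : ∀ i < n, ∀ e' : V × Fin K, partitionIndep B (insert e' (s i)) →
      marg e' (s i) ≤ δ i := by
    intro i hi e' he'
    obtain ⟨e, he1, he2, hmax⟩ := hstep i hi
    have h1 : pairCoverage γ (insert e' (s i)) ≤ pairCoverage γ (s (i + 1)) := by
      rw [he2]; exact hmax e' he'
    rw [hins, hδ i hi] at h1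
    exact Nat.le_of_add_le_add_left h1
  -- counts per color
  set c : ℕ → Fin K → ℕ := fun i k => ((s i).filter fun p => p.2 = k).card with hc
  have hfeas : ∀ i < n, ∀ e' : V × Fin K, c i e'.2 < B e'.2 →
      partitionIndep B (insert e' (s i)) := by
    intro i hi e' hlt k
    rw [Finset.filter_insert]
    by_cases hk : e'.2 = k
    · rw [if_pos hk]
      subst hk
      exact le_trans (Finset.card_insert_le _ _) hlt
    · rw [if_neg hk]
      exact hindep i (le_of_lt hi) k
  -- Hall's condition and SDR
  set A : Fin K → Finset ℕ := fun k => (Finset.range n).filter fun i => c i k < B k with hA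
  have hall : ∀ S : Finset {e // e ∈ T},
      S.card ≤ (S.biUnion fun e => A (e.1.2)).card := by
    intro S
    set C : Finset (Fin K) := S.image fun e => e.1.2 with hC
    have hbU : (S.biUnion fun e => A (e.1.2)) = C.biUnion A := by
      rw [hC, Finset.image_biUnion]
    have hsum_le : ∑ k ∈ C, B k ≤ n := by
      rw [hn]
      exact Finset.sum_le_sum_of_subset (Finset.subset_univ C)
    -- Step A : |S| ≤ ∑_{k ∈ C} B k
    have stepA : S.card ≤ ∑ k ∈ C, B k := by
      have h1 : S.card = (S.image Subtype.val).card :=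
        (Finset.card_image_of_injective _ Subtype.val_injective).symm
      have h2 : S.image Subtype.val ⊆ C.biUnion fun k => T.filter fun p => p.2 = k := by
        intro p hp
        obtain ⟨a, ha, rfl⟩ := Finset.mem_image.mp hp
        refine Finset.mem_biUnion.mpr ⟨a.1.2, ?_, ?_⟩
        · exact Finset.mem_image.mpr ⟨a, ha, rfl⟩
        · exact Finset.mem_filter.mpr ⟨a.2, rfl⟩
      calc S.card = (S.image Subtype.val).card := h1
        _ ≤ (C.biUnion fun k => T.filter fun p => p.2 = k).card :=
            Finset.card_le_card h2
        _ ≤ ∑ k ∈ C, (T.filter fun p => p.2 = k).card := Finset.card_biUnion_le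
        _ ≤ ∑ k ∈ C, B k := Finset.sum_le_sum fun k _ => hT k
    -- Step B : range (∑_{k∈C} B k) ⊆ C.biUnion A
    have stepB : Finset.range (∑ k ∈ C, B k) ⊆ C.biUnion A := by
      intro i hi
      rw [Finset.mem_range] at hi
      by_contra hcon
      have hforall : ∀ k ∈ C, B k ≤ c i k := by
        intro k hk
        by_contra hlt
        exact hcon (Finset.mem_biUnion.mpr ⟨k, hk,
          Finset.mem_filter.mpr ⟨Finset.mem_range.mpr (lt_of_lt_of_le hi hsum_le),
            lt_of_not_ge hlt⟩⟩)
      have hdisj : ∀ k1 ∈ C, ∀ k2 ∈ C, k1 ≠ k2 →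
          Disjoint ((s i).filter fun p => p.2 = k1) ((s i).filter fun p => p.2 = k2) := by
        intro k1 _ k2 _ hne
        rw [Finset.disjoint_left]
        intro p hp1 hp2
        exact hne ((Finset.mem_filter.mp hp1).2.symm.trans (Finset.mem_filter.mp hp2).2)
      have hsum_c : ∑ k ∈ C, c i k ≤ (s i).card := by
        rw [hc]
        rw [← Finset.card_biUnion hdisj]
        exact Finset.card_le_card (Finset.biUnion_subset.mpr fun k _ =>
          Finset.filter_subset _ _)
      have : ∑ k ∈ C, B k ≤ i :=
        le_trans (le_trans (Finset.sum_le_sum hforall) hsum_c)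
          (hcard i (le_of_lt (lt_of_lt_of_le hi hsum_le)))
      omega
    calc S.card ≤ ∑ k ∈ C, B k := stepA
      _ = (Finset.range (∑ k ∈ C, B k)).card := (Finset.card_range _).symm
      _ ≤ (C.biUnion A).card := Finset.card_le_card stepB
      _ = (S.biUnion fun e => A (e.1.2)).card := by rw [hbU]
  obtain ⟨f, hfinj, hfmem⟩ :=
    (Finset.all_card_le_biUnion_card_iff_exists_injective
      (fun e : {e // e ∈ T} => A (e.1.2))).mp hall
  -- main bound : F(T) ≤ F(G) + ∑_{e∈T} marg e G
  set G := s n with hG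
  have hbound : pairCoverage γ T ≤ pairCoverage γ G + ∑ e ∈ T, marg e G := by
    have h1 : U T ⊆ U G ∪ T.biUnion fun e => γ e.1 e.2 \ U G := by
      intro v hv
      obtain ⟨e, he, hve⟩ := Finset.mem_biUnion.mp hv
      by_cases hvg : v ∈ U G
      · exact Finset.mem_union_left _ hvg
      · exact Finset.mem_union_right _ (Finset.mem_biUnion.mpr
          ⟨e, he, Finset.mem_sdiff.mpr ⟨hve, hvg⟩⟩)
    calc pairCoverage γ T ≤ (U G ∪ T.biUnion fun e => γ e.1 e.2 \ U G).card :=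
          Finset.card_le_card h1
      _ ≤ (U G).card + (T.biUnion fun e => γ e.1 e.2 \ U G).card :=
          Finset.card_union_le _ _
      _ ≤ (U G).card + ∑ e ∈ T, (γ e.1 e.2 \ U G).card :=
          Nat.add_le_add_left Finset.card_biUnion_le _
      _ = pairCoverage γ G + ∑ e ∈ T, marg e G := rfl
  -- ∑_{e∈T} marg e G ≤ F(G)
  have hmargsum : ∑ e ∈ T, marg e G ≤ pairCoverage γ G := by
    have h1 : ∑ e ∈ T, marg e G = ∑ a ∈ T.attach, marg a.1 G :=
      (Finset.sum_attach T fun e => marg e G).symm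
    have h2 : ∀ a : {e // e ∈ T}, marg a.1 G ≤ δ (f a) := by
      intro a
      have hfa := hfmem a
      rw [hA, Finset.mem_filter, Finset.mem_range] at hfa
      obtain ⟨hfan, hfac⟩ := hfa
      have hfeas' : partitionIndep B (insert a.1 (s (f a))) := hfeas _ hfan _ hfac
      have hsG : U (s (f a)) ⊆ U G := hUmono (hmono _ _ (le_of_lt hfan) le_rfl)
      have hm1 : marg a.1 G ≤ marg a.1 (s (f a)) :=
        Finset.card_le_card (Finset.sdiff_subset_sdiff (Finset.Subset.refl _) hsG)
      exact le_trans hm1 (hgreedy _ hfan _ hfeas')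
    have h3 : ∑ a ∈ T.attach, marg a.1 G ≤ ∑ a ∈ T.attach, δ (f a) :=
      Finset.sum_le_sum fun a _ => h2 a
    have h4 : ∑ a ∈ T.attach, δ (f a) = ∑ i ∈ T.attach.image f, δ i :=
      (Finset.sum_image fun a _ b _ h => hfinj h).symm
    have h5 : T.attach.image f ⊆ Finset.range n := by
      intro i hi
      obtain ⟨a, _, rfl⟩ := Finset.mem_image.mp hi
      have := hfmem a
      rw [hA, Finset.mem_filter] at this
      exact this.1
    have h6 : ∑ i ∈ T.attach.image f, δ i ≤ ∑ i ∈ Finset.range n, δ i :=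
      Finset.sum_le_sum_of_subset h5
    rw [h1, htel n le_rfl]
    exact le_trans h3 (le_trans (le_of_eq h4) h6)
  calc pairCoverage γ T ≤ pairCoverage γ G + ∑ e ∈ T, marg e G := hbound
    _ ≤ pairCoverage γ G + pairCoverage γ G := Nat.add_le_add_left hmargsum _
    _ = 2 * pairCoverage γ G := (Nat.two_mul _).symm
end

section
/- The coverage function of the general diffusion model is not monotone: there exists a graph with trust values, thresholds, and evacuation time τ = 1, a single source of value 1, and seed sets ψ = {a} ⊂ ψ' = {a,b}, such that the number of nodes ultimately evacuated from ψ' (namely 5) is strictly less than from ψ (namely k+4, for any k ≥ 2). -/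
open scoped NNReal Classical

/-- One step of the max-max diffusion with evacuation time `τ = 1`: the state consists of
the set of still-active nodes and the current information values. Active nodes whose value
reaches their threshold are Believed; they propagate their value, attenuated by the edge
trusts `α`, to every node, and then evacuate (are removed from the active set). -/
noncomputable def estep {V : Type*} [Fintype V] (α : V → V → ℝ≥0) (t : V → ℝ≥0)
    (s : Finset V × (V → ℝ≥0)) : Finset V × (V → ℝ≥0) :=
  (s.1.filter fun u => ¬ t u ≤ s.2 u,
   fun u => s.2 u ⊔ (s.1.filter fun w => t w ≤ s.2 w).sup fun w => α w u * s.2 w)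

/-- The number of nodes that ultimately evacuate, starting from all nodes active with
initial information values `init`. -/
noncomputable def evacCount {V : Type*} (iV : Fintype V) (α : V → V → ℝ≥0) (t : V → ℝ≥0)
    (init : V → ℝ≥0) : ℕ :=
  Set.ncard {u : V | ∃ m : ℕ, u ∉ ((estep α t)^[m] (Finset.univ, init)).1}

namespace NotMono

lemma estep_eq {V : Type*} [Fintype V] (α : V → V → ℝ≥0) (t : V → ℝ≥0)
    (S S' B : Finset V) (f f' : V → ℝ≥0)
    (hB : S.filter (fun w => t w ≤ f w) = B)
    (hS : S.filter (fun u => ¬ t u ≤ f u) = S')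
    (hf : ∀ u, f u ⊔ B.sup (fun w => α w u * f w) = f' u) :
    estep α t (S, f) = (S', f') := by
  unfold estep
  exact Prod.ext hS
    (funext fun u => by rw [show (S.filter fun w => t w ≤ f w) = B from hB]; exact hf u)

lemma estep_fixed {V : Type*} [Fintype V] (α : V → V → ℝ≥0) (t : V → ℝ≥0)
    (s : Finset V × (V → ℝ≥0)) (h : s.1.filter (fun w => t w ≤ s.2 w) = ∅) :
    estep α t s = s := by
  unfold estep
  apply Prod.ext
  · simp only
    rw [Finset.filter_eq_self]
    intro u hu hle
    have : u ∈ s.1.filter (fun w => t w ≤ s.2 w) := Finset.mem_filter.mpr ⟨hu, hle⟩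
    rw [h] at this
    exact absurd this (Finset.notMem_empty u)
  · funext u
    rw [h]
    simp

lemma iter_fst_antitone {V : Type*} [Fintype V] (α : V → V → ℝ≥0) (t : V → ℝ≥0)
    (s : Finset V × (V → ℝ≥0)) :
    ∀ m n : ℕ, m ≤ n → ((estep α t)^[n] s).1 ⊆ ((estep α t)^[m] s).1 := by
  intro m n h
  induction n with
  | zero =>
    have : m = 0 := Nat.le_zero.mp h
    subst this; exact Finset.Subset.refl _
  | succ n ih =>
    rcases Nat.lt_or_ge m (n+1) with h' | h'
    · have hsub := ih (Nat.lt_succ_iff.mp h')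
      rw [Function.iterate_succ_apply']
      exact (Finset.filter_subset _ _).trans hsub
    · have : m = n + 1 := le_antisymm h h'
      subst this; exact Finset.Subset.refl _

lemma evac_set_eq {V : Type*} [Fintype V] (α : V → V → ℝ≥0) (t : V → ℝ≥0)
    (init : V → ℝ≥0) (M : ℕ) (S : Finset V) (f : V → ℝ≥0)
    (hM : (estep α t)^[M] (Finset.univ, init) = (S, f))
    (hfix : estep α t (S, f) = (S, f)) :
    {u : V | ∃ m : ℕ, u ∉ ((estep α t)^[m] (Finset.univ, init)).1} = (↑S : Set V)ᶜ := by
  ext u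
  simp only [Set.mem_setOf_eq, Set.mem_compl_iff, Finset.mem_coe]
  constructor
  · rintro ⟨m, hm⟩
    rcases le_or_gt m M with h | h
    · intro hu
      exact hm (iter_fst_antitone α t _ m M h (by rw [hM]; exact hu))
    · have key : (estep α t)^[m] (Finset.univ, init) = (S, f) := by
        have h1 : (estep α t)^[m] (Finset.univ, init)
            = (estep α t)^[m - M] ((estep α t)^[M] (Finset.univ, init)) := by
          rw [← Function.iterate_add_apply]; congr 1; omega
        rw [h1, hM, Function.iterate_fixed hfix]
      rw [key] at hm
      exact hm
  · intro hu
    exact ⟨M, by rw [hM]; exact hu⟩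

noncomputable def tr (k : ℕ) : Fin 5 ⊕ Fin k → Fin 5 ⊕ Fin k → ℝ≥0 := fun u v =>
  if (u = .inl 0 ∧ v = .inl 1) ∨ (u = .inl 1 ∧ v = .inl 0)
    ∨ (u = .inl 1 ∧ v = .inl 2) ∨ (u = .inl 2 ∧ v = .inl 1)
    ∨ (u = .inl 2 ∧ v = .inl 3) ∨ (u = .inl 3 ∧ v = .inl 2) then 1
  else if (u = .inl 3 ∧ v = .inl 4) ∨ (u = .inl 4 ∧ v = .inl 3) then 1/10
  else if (u = .inl 3 ∧ (∃ i, v = .inr i)) ∨ ((∃ i, u = .inr i) ∧ v = .inl 3) then 1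
  else 0

noncomputable def th (k : ℕ) : Fin 5 ⊕ Fin k → ℝ≥0 := fun u =>
  if u = .inl 3 then 1/10 else 1/2

lemma L1 : ((1:ℝ≥0)/2 ≤ 1) := by rw [← NNReal.coe_le_coe]; push_cast; norm_num
lemma L2 : ¬((1:ℝ≥0)/2 ≤ 0) := by
  rw [not_le, ← NNReal.coe_lt_coe]; push_cast; norm_num
lemma L3 : ¬((1:ℝ≥0)/2 ≤ 1/10) := by
  rw [not_le, ← NNReal.coe_lt_coe]; push_cast; norm_num
lemma L5 : ¬((1:ℝ≥0)/10 ≤ 0) := by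
  rw [not_le, ← NNReal.coe_lt_coe]; push_cast; norm_num
lemma L6 : ((1:ℝ≥0)/10 ≤ 1) := by rw [← NNReal.coe_le_coe]; push_cast; norm_num
lemma M1 : ((1:ℝ≥0) ⊔ 1/10) = 1 := sup_eq_left.mpr L6
lemma M2 : ((1:ℝ≥0)/10 ⊔ 1) = 1 := sup_eq_right.mpr L6
lemma M3 : ((1:ℝ≥0) ⊔ 1/10 * (1/10)) = 1 := sup_eq_left.mpr (by
  rw [← NNReal.coe_le_coe]; push_cast; norm_num)
lemma N1 : (1:ℝ≥0) < 2⁻¹ * 10 := by rw [← NNReal.coe_lt_coe]; push_cast; norm_num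
lemma N2 : (10⁻¹ : ℝ≥0) * 2 < 1 := by rw [← NNReal.coe_lt_coe]; push_cast; norm_num

-- Run with seeds {a, b} = {inl 0, inl 4}
lemma A0 (k : ℕ) :
    estep (tr k) (th k)
      (Finset.univ, fun u => if u = (.inl 0 : Fin 5 ⊕ Fin k) ∨ u = .inl 4 then 1 else 0)
    = (({.inl 0, .inl 4} : Finset (Fin 5 ⊕ Fin k))ᶜ,
       fun u => if u = (.inl 0 : Fin 5 ⊕ Fin k) ∨ u = .inl 1 ∨ u = .inl 4 then 1
                else if u = .inl 3 then 1/10 else 0) := by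
  apply estep_eq (B := {.inl 0, .inl 4})
  · ext u
    rcases u with i | i
    · fin_cases i <;> simp [th, L1, L2, L5, N1, N2]
    · simp [th, L2, N1, N2]
  · ext u
    rcases u with i | i
    · fin_cases i <;> simp [th, L1, L2, L5, N1, N2]
    · simp [th, L2, N1, N2]
  · intro u
    rcases u with i | i
    · fin_cases i <;> simp [tr, Finset.sup_insert, Finset.sup_singleton, M1, M2, M3]
    · simp [tr, Finset.sup_insert, Finset.sup_singleton, M1, M2, M3]

lemma A1 (k : ℕ) :
    estep (tr k) (th k)
      (({.inl 0, .inl 4} : Finset (Fin 5 ⊕ Fin k))ᶜ,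
       fun u => if u = (.inl 0 : Fin 5 ⊕ Fin k) ∨ u = .inl 1 ∨ u = .inl 4 then 1
                else if u = .inl 3 then 1/10 else 0)
    = (({.inl 0, .inl 1, .inl 3, .inl 4} : Finset (Fin 5 ⊕ Fin k))ᶜ,
       fun u => if u = (.inl 0 : Fin 5 ⊕ Fin k) ∨ u = .inl 1 ∨ u = .inl 2 ∨ u = .inl 4 then 1
                else 1/10) := by
  apply estep_eq (B := {.inl 1, .inl 3})
  · ext u
    rcases u with i | i
    · fin_cases i <;> simp [th, L1, L2, L5, N1, N2]
    · simp [th, L2, N1, N2]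
  · ext u
    rcases u with i | i
    · fin_cases i <;> simp [th, L1, L2, L5, N1, N2]
    · simp [th, L2, N1, N2]
  · intro u
    rcases u with i | i
    · fin_cases i <;> simp [tr, Finset.sup_insert, Finset.sup_singleton, M1, M2, M3]
    · simp [tr, Finset.sup_insert, Finset.sup_singleton, M1, M2, M3]

lemma A2 (k : ℕ) :
    estep (tr k) (th k)
      (({.inl 0, .inl 1, .inl 3, .inl 4} : Finset (Fin 5 ⊕ Fin k))ᶜ,
       fun u => if u = (.inl 0 : Fin 5 ⊕ Fin k) ∨ u = .inl 1 ∨ u = .inl 2 ∨ u = .inl 4 then 1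
                else 1/10)
    = (({.inl 0, .inl 1, .inl 2, .inl 3, .inl 4} : Finset (Fin 5 ⊕ Fin k))ᶜ,
       fun u => Sum.elim (fun _ => (1:ℝ≥0)) (fun _ => 1/10) u) := by
  apply estep_eq (B := {.inl 2})
  · ext u
    rcases u with i | i
    · fin_cases i <;> simp [th, L1, L3, N1, N2]
    · simp [th, L3, N1, N2]
  · ext u
    rcases u with i | i
    · fin_cases i <;> simp [th, L1, L3, N1, N2]
    · simp [th, L3, N1, N2]
  · intro u
    rcases u with i | i
    · fin_cases i <;> simp [tr, Finset.sup_singleton, M1, M2, M3]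
    · simp [tr, Finset.sup_singleton, M1, M2, M3]

lemma Afix (k : ℕ) :
    estep (tr k) (th k)
      (({.inl 0, .inl 1, .inl 2, .inl 3, .inl 4} : Finset (Fin 5 ⊕ Fin k))ᶜ,
       fun u => Sum.elim (fun _ => (1:ℝ≥0)) (fun _ => 1/10) u)
    = (({.inl 0, .inl 1, .inl 2, .inl 3, .inl 4} : Finset (Fin 5 ⊕ Fin k))ᶜ,
       fun u => Sum.elim (fun _ => (1:ℝ≥0)) (fun _ => 1/10) u) := by
  apply estep_fixed
  rw [Finset.eq_empty_iff_forall_notMem]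
  intro u
  rcases u with i | i
  · fin_cases i <;> simp [th, L3, N1, N2]
  · simp [th, L3, N1, N2]

-- Run with seed {a} = {inl 0}
lemma B0 (k : ℕ) :
    estep (tr k) (th k)
      (Finset.univ, fun u => if u = (.inl 0 : Fin 5 ⊕ Fin k) then 1 else 0)
    = (({.inl 0} : Finset (Fin 5 ⊕ Fin k))ᶜ,
       fun u => if u = (.inl 0 : Fin 5 ⊕ Fin k) ∨ u = .inl 1 then 1 else 0) := by
  apply estep_eq (B := {.inl 0})
  · ext u
    rcases u with i | i
    · fin_cases i <;> simp [th, L1, L2, L5, N1, N2]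
    · simp [th, L2, N1, N2]
  · ext u
    rcases u with i | i
    · fin_cases i <;> simp [th, L1, L2, L5, N1, N2]
    · simp [th, L2, N1, N2]
  · intro u
    rcases u with i | i
    · fin_cases i <;> simp [tr, Finset.sup_singleton, M1, M2, M3]
    · simp [tr, Finset.sup_singleton, M1, M2, M3]

lemma B1 (k : ℕ) :
    estep (tr k) (th k)
      (({.inl 0} : Finset (Fin 5 ⊕ Fin k))ᶜ,
       fun u => if u = (.inl 0 : Fin 5 ⊕ Fin k) ∨ u = .inl 1 then 1 else 0)
    = (({.inl 0, .inl 1} : Finset (Fin 5 ⊕ Fin k))ᶜ,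
       fun u => if u = (.inl 0 : Fin 5 ⊕ Fin k) ∨ u = .inl 1 ∨ u = .inl 2 then 1 else 0) := by
  apply estep_eq (B := {.inl 1})
  · ext u
    rcases u with i | i
    · fin_cases i <;> simp [th, L1, L2, L5, N1, N2]
    · simp [th, L2, N1, N2]
  · ext u
    rcases u with i | i
    · fin_cases i <;> simp [th, L1, L2, L5, N1, N2]
    · simp [th, L2, N1, N2]
  · intro u
    rcases u with i | i
    · fin_cases i <;> simp [tr, Finset.sup_singleton, M1, M2, M3]
    · simp [tr, Finset.sup_singleton, M1, M2, M3]

lemma B2 (k : ℕ) :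
    estep (tr k) (th k)
      (({.inl 0, .inl 1} : Finset (Fin 5 ⊕ Fin k))ᶜ,
       fun u => if u = (.inl 0 : Fin 5 ⊕ Fin k) ∨ u = .inl 1 ∨ u = .inl 2 then 1 else 0)
    = (({.inl 0, .inl 1, .inl 2} : Finset (Fin 5 ⊕ Fin k))ᶜ,
       fun u => if u = (.inl 0 : Fin 5 ⊕ Fin k) ∨ u = .inl 1 ∨ u = .inl 2 ∨ u = .inl 3 then 1
                else 0) := by
  apply estep_eq (B := {.inl 2})
  · ext u
    rcases u with i | i
    · fin_cases i <;> simp [th, L1, L2, L5, N1, N2]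
    · simp [th, L2, N1, N2]
  · ext u
    rcases u with i | i
    · fin_cases i <;> simp [th, L1, L2, L5, N1, N2]
    · simp [th, L2, N1, N2]
  · intro u
    rcases u with i | i
    · fin_cases i <;> simp [tr, Finset.sup_singleton, M1, M2, M3]
    · simp [tr, Finset.sup_singleton, M1, M2, M3]

lemma B3 (k : ℕ) :
    estep (tr k) (th k)
      (({.inl 0, .inl 1, .inl 2} : Finset (Fin 5 ⊕ Fin k))ᶜ,
       fun u => if u = (.inl 0 : Fin 5 ⊕ Fin k) ∨ u = .inl 1 ∨ u = .inl 2 ∨ u = .inl 3 then 1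
                else 0)
    = (({.inl 0, .inl 1, .inl 2, .inl 3} : Finset (Fin 5 ⊕ Fin k))ᶜ,
       fun u => if u = (.inl 4 : Fin 5 ⊕ Fin k) then 1/10 else 1) := by
  apply estep_eq (B := {.inl 3})
  · ext u
    rcases u with i | i
    · fin_cases i <;> simp [th, L1, L2, L5, L6, N1, N2]
    · simp [th, L2, N1, N2]
  · ext u
    rcases u with i | i
    · fin_cases i <;> simp [th, L1, L2, L5, L6, N1, N2]
    · simp [th, L2, N1, N2]
  · intro u
    rcases u with i | i
    · fin_cases i <;> simp [tr, Finset.sup_singleton, M1, M2, M3]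
    · simp [tr, Finset.sup_singleton, M1, M2, M3]

lemma B4 (k : ℕ) :
    estep (tr k) (th k)
      (({.inl 0, .inl 1, .inl 2, .inl 3} : Finset (Fin 5 ⊕ Fin k))ᶜ,
       fun u => if u = (.inl 4 : Fin 5 ⊕ Fin k) then 1/10 else 1)
    = (({.inl 4} : Finset (Fin 5 ⊕ Fin k)),
       fun u => if u = (.inl 4 : Fin 5 ⊕ Fin k) then 1/10 else 1) := by
  apply estep_eq (B := (Finset.univ : Finset (Fin k)).image Sum.inr)
  · ext u
    rcases u with i | i
    · fin_cases i <;> simp [th, L1, L3, N1, N2]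
    · simp [th, L1, N1, N2]
  · ext u
    rcases u with i | i
    · fin_cases i <;> simp [th, L1, L3, N1, N2]
    · simp [th, L1, N1, N2]
  · intro u
    refine sup_eq_left.mpr (Finset.sup_le ?_)
    intro w hw
    rw [Finset.mem_image] at hw
    obtain ⟨i, -, rfl⟩ := hw
    rcases u with j | j
    · fin_cases j <;> simp [tr]
    · simp [tr]

lemma Bfix (k : ℕ) :
    estep (tr k) (th k)
      (({.inl 4} : Finset (Fin 5 ⊕ Fin k)),
       fun u => if u = (.inl 4 : Fin 5 ⊕ Fin k) then 1/10 else 1)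
    = (({.inl 4} : Finset (Fin 5 ⊕ Fin k)),
       fun u => if u = (.inl 4 : Fin 5 ⊕ Fin k) then 1/10 else 1) := by
  apply estep_fixed
  rw [Finset.eq_empty_iff_forall_notMem]
  intro u
  rcases u with i | i
  · fin_cases i <;> simp [th, L3, N1, N2]
  · simp [th, N1, N2]

end NotMono

open NotMono in
/-- The coverage function of the general diffusion model is not monotone: for every
`k ≥ 2` there is a network (with trust values, thresholds, evacuation time `τ = 1` and a
single fully-trusted source of value `1`) and nodes `a ≠ b` such that seeding
`ψ' = {a,b}` evacuates exactly `5` nodes while seeding `ψ = {a}` evacuates `k + 4` nodes,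
so the larger seed set yields strictly fewer evacuated nodes. -/
theorem general_model_not_monotone :
    ∀ k : ℕ, 2 ≤ k →
      ∃ (V : Type) (iV : Fintype V) (α : V → V → ℝ≥0) (t : V → ℝ≥0) (a b : V),
        a ≠ b ∧ (∀ u v, α u v ≤ 1) ∧
        evacCount iV α t (fun u => if u = a ∨ u = b then 1 else 0) = 5 ∧
        evacCount iV α t (fun u => if u = a then 1 else 0) = k + 4 ∧
        evacCount iV α t (fun u => if u = a ∨ u = b then 1 else 0) <
          evacCount iV α t (fun u => if u = a then 1 else 0) := by
  intro k hk
  have hA : evacCount inferInstance (tr k) (th k)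
      (fun u => if u = (.inl 0 : Fin 5 ⊕ Fin k) ∨ u = .inl 4 then 1 else 0) = 5 := by
    have hM : (estep (tr k) (th k))^[3]
        (Finset.univ, fun u => if u = (.inl 0 : Fin 5 ⊕ Fin k) ∨ u = .inl 4 then 1 else 0)
        = (({.inl 0, .inl 1, .inl 2, .inl 3, .inl 4} : Finset (Fin 5 ⊕ Fin k))ᶜ,
           fun u => Sum.elim (fun _ => (1:ℝ≥0)) (fun _ => 1/10) u) := by
      rw [show (3:ℕ) = 2 + 1 from rfl, Function.iterate_succ_apply',
        show (2:ℕ) = 1 + 1 from rfl, Function.iterate_succ_apply',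
        Function.iterate_one, A0, A1, A2]
    unfold evacCount
    rw [evac_set_eq (tr k) (th k) _ 3 _ _ hM (Afix k), Finset.coe_compl, compl_compl,
      Set.ncard_coe_finset]
    simp
  have hB : evacCount inferInstance (tr k) (th k)
      (fun u => if u = (.inl 0 : Fin 5 ⊕ Fin k) then 1 else 0) = k + 4 := by
    have hM : (estep (tr k) (th k))^[5]
        (Finset.univ, fun u => if u = (.inl 0 : Fin 5 ⊕ Fin k) then 1 else 0)
        = (({.inl 4} : Finset (Fin 5 ⊕ Fin k)),
           fun u => if u = (.inl 4 : Fin 5 ⊕ Fin k) then 1/10 else 1) := by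
      have e5 := Function.iterate_succ_apply' (estep (tr k) (th k)) 4
        (Finset.univ, fun u => if u = (.inl 0 : Fin 5 ⊕ Fin k) then 1 else 0)
      have e4 := Function.iterate_succ_apply' (estep (tr k) (th k)) 3
        (Finset.univ, fun u => if u = (.inl 0 : Fin 5 ⊕ Fin k) then 1 else 0)
      have e3 := Function.iterate_succ_apply' (estep (tr k) (th k)) 2
        (Finset.univ, fun u => if u = (.inl 0 : Fin 5 ⊕ Fin k) then 1 else 0)
      have e2 := Function.iterate_succ_apply' (estep (tr k) (th k)) 1
        (Finset.univ, fun u => if u = (.inl 0 : Fin 5 ⊕ Fin k) then 1 else 0)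
      simp only [Nat.succ_eq_add_one, Nat.reduceAdd] at e5 e4 e3 e2
      rw [e5, e4, e3, e2, Function.iterate_one, B0, B1, B2, B3, B4]
    unfold evacCount
    rw [evac_set_eq (tr k) (th k) _ 5 _ _ hM (Bfix k), ← Finset.coe_compl,
      Set.ncard_coe_finset, Finset.card_compl]
    simp only [Finset.card_singleton]
    rw [show Fintype.card (Fin 5 ⊕ Fin k) = 5 + k by simp]
    omega
  have hA' : evacCount inferInstance (tr k) (th k)
      (fun u => @ite ℝ≥0 (u = (.inl 0 : Fin 5 ⊕ Fin k) ∨ u = .inl 4)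
        (@instDecidableOr _ _ (Classical.propDecidable _) (Classical.propDecidable _)) 1 0)
      = 5 := by
    rw [show (fun u => @ite ℝ≥0 (u = (.inl 0 : Fin 5 ⊕ Fin k) ∨ u = .inl 4)
          (@instDecidableOr _ _ (Classical.propDecidable _) (Classical.propDecidable _)) 1 0)
        = (fun u => if u = (.inl 0 : Fin 5 ⊕ Fin k) ∨ u = .inl 4 then 1 else 0) from
      funext fun u => by by_cases h : (u = (.inl 0 : Fin 5 ⊕ Fin k) ∨ u = .inl 4) <;> simp [h]]
    exact hA
  have hB' : evacCount inferInstance (tr k) (th k)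
      (fun u => @ite ℝ≥0 (u = (.inl 0 : Fin 5 ⊕ Fin k)) (Classical.propDecidable _) 1 0)
      = k + 4 := by
    rw [show (fun u => @ite ℝ≥0 (u = (.inl 0 : Fin 5 ⊕ Fin k))
          (Classical.propDecidable _) 1 0)
        = (fun u => if u = (.inl 0 : Fin 5 ⊕ Fin k) then 1 else 0) from
      funext fun u => by by_cases h : (u = (.inl 0 : Fin 5 ⊕ Fin k)) <;> simp [h]]
    exact hB
  refine ⟨Fin 5 ⊕ Fin k, inferInstance, tr k, th k, .inl 0, .inl 4, by simp, ?_, hA', hB', ?_⟩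
  · intro u v
    unfold tr
    split
    · exact le_refl 1
    · split
      · exact L6
      · split
        · exact le_refl 1
        · exact zero_le
  · rw [hA', hB']; omega
end

section
/- In the max-max diffusion model with no evacuation and no querying, the final information value at node u from source k when seeding node x equals α(k,x) · I_k · max over all paths P from x to u of the product of edge trusts along P, provided at every intermediate node w on the maximizing path the accumulated value reaches t(w); in particular, if all thresholds are 0, the final value at u from singleton seed (x,k) is α(k,x) · I_k · max_P ∏_{(v,w) ∈ P} α(v,w). -/
open scoped NNReal

/-- The product of the edge trusts along the walk starting at `v` and visiting the
vertices of `l` in order. -/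
noncomputable def walkProd {V : Type*} (α : V → V → ℝ≥0) : V → List V → ℝ≥0
  | _, [] => 1
  | v, w :: l => α v w * walkProd α w l

lemma walkProd_le_one {V : Type*} (α : V → V → ℝ≥0) (hα : ∀ u v, α u v ≤ 1) :
    ∀ (l : List V) (v : V), walkProd α v l ≤ 1 := by
  intro l
  induction l with
  | nil => intro v; simp [walkProd]
  | cons w l ih =>
      intro v
      calc α v w * walkProd α w l ≤ 1 * 1 := mul_le_mul' (hα v w) (ih w)
      _ = 1 := one_mul 1

lemma walkProd_concat {V : Type*} (α : V → V → ℝ≥0) :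
    ∀ (l : List V) (v w : V),
      walkProd α v (l ++ [w]) = walkProd α v l * α (l.getLastD v) w := by
  intro l
  induction l with
  | nil => intro v w; simp [walkProd]
  | cons a l ih =>
      intro v w
      show α v a * walkProd α a (l ++ [w]) = α v a * walkProd α a l * α ((a :: l).getLastD v) w
      rw [ih, List.getLastD_cons, mul_assoc]

/-- In the max-max model with no evacuation and no querying, when all thresholds are `0`
(so every node always propagates), the final information value at node `u` from source `k`
when seeding only node `x` equals `α(k,x) · I_k` times the maximum, over all walks from
`x` to `u`, of the product of the edge trusts along the walk. -/
theorem maxmax_final_value_eq_max_path_product {V : Type*} [Fintype V] [DecidableEq V]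
    {K : ℕ} (α : V → V → ℝ≥0) (t : V → ℝ≥0) (I : Fin K → ℝ≥0) (β : Fin K → V → ℝ≥0)
    (hα : ∀ u v, α u v ≤ 1) (hβ : ∀ k u, β k u ≤ 1)
    (ht : ∀ u, t u = 0) (x : V) (k : Fin K) (u : V) :
    (⨆ m : ℕ, mval α t (fun u j => if u = x ∧ j = k then β k x * I k else 0) m u k) =
      β k x * I k * ⨆ l : List V, if l.getLastD x = u then walkProd α x l else 0 := by
  set c : ℝ≥0 := β k x * I k with hc
  set init : V → Fin K → ℝ≥0 := fun u j => if u = x ∧ j = k then c else 0 with hinit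
  -- step equation, using that all thresholds vanish
  have hstep : ∀ (m : ℕ) (u : V) (j : Fin K),
      mval α t init (m + 1) u j =
        mval α t init m u j ⊔ Finset.univ.sup (fun v => α v u * mval α t init m v j) := by
    intro m u j
    simp [mval, ht]
  -- everything is bounded by `c`
  have hle : ∀ (m : ℕ) (u : V) (j : Fin K), mval α t init m u j ≤ c := by
    intro m
    induction m with
    | zero =>
        intro u j
        show init u j ≤ c
        simp only [hinit]
        split <;> simp
    | succ m ih =>
        intro u j
        rw [hstep]
        refine sup_le (ih u j) (Finset.sup_le fun v _ => ?_)
        calc α v u * mval α t init m v j ≤ 1 * c := mul_le_mul' (hα v u) (ih v j)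
        _ = c := one_mul c
  have hbddS : ∀ u : V, BddAbove (Set.range fun l : List V =>
      if l.getLastD x = u then walkProd α x l else 0) := by
    intro u
    refine ⟨1, ?_⟩
    rintro _ ⟨l, rfl⟩
    dsimp only
    split
    · exact walkProd_le_one α hα l x
    · exact zero_le
  -- upper bound: values never exceed the walk supremum
  have hup : ∀ (m : ℕ) (u : V), mval α t init m u k ≤
      c * ⨆ l : List V, if l.getLastD x = u then walkProd α x l else 0 := by
    intro m
    induction m with
    | zero =>
        intro u0
        show init u0 k ≤ _
        by_cases h : u0 = x
        · have h0 : (fun l : List V => if l.getLastD x = x then walkProd α x l else 0)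
              ([] : List V) = 1 := by simp [walkProd]
          have h1 : (1 : ℝ≥0) ≤ ⨆ l : List V, if l.getLastD x = x then walkProd α x l else 0 :=
            h0 ▸ le_ciSup (hbddS x) ([] : List V)
          rw [h]
          refine le_trans ?_ (mul_le_mul_right h1 c)
          simp [hinit]
        · simp [hinit, h]
    | succ m ih =>
        intro u0
        rw [hstep]
        refine sup_le (ih u0) (Finset.sup_le fun v _ => ?_)
        have key : α v u0 * (⨆ l : List V, if l.getLastD x = v then walkProd α x l else 0) ≤
            ⨆ l : List V, if l.getLastD x = u0 then walkProd α x l else 0 := by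
          rw [NNReal.mul_iSup]
          refine ciSup_le fun l => ?_
          by_cases h : l.getLastD x = v
          · refine le_trans (le_of_eq ?_) (le_ciSup (hbddS u0) (l ++ [u0]))
            show α v u0 * (if l.getLastD x = v then walkProd α x l else 0) =
              if (l ++ [u0]).getLastD x = u0 then walkProd α x (l ++ [u0]) else 0
            rw [if_pos h, if_pos (by simp), walkProd_concat, h, mul_comm]
          · rw [if_neg h, mul_zero]
            exact zero_le
        calc α v u0 * mval α t init m v k
            ≤ α v u0 * (c * ⨆ l : List V, if l.getLastD x = v then walkProd α x l else 0) :=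
              mul_le_mul_right (ih v) _
        _ = c * (α v u0 * ⨆ l : List V, if l.getLastD x = v then walkProd α x l else 0) := by
              ring
        _ ≤ _ := mul_le_mul_right key c
  -- lower bound: each walk's value is achieved
  have hlow : ∀ l : List V, c * walkProd α x l ≤ mval α t init l.length (l.getLastD x) k := by
    intro l
    induction l using List.reverseRecOn with
    | nil => show c * 1 ≤ init x k; simp [hinit]
    | append_singleton l w ih =>
        have hlast : (l ++ [w]).getLastD x = w := by simp
        have hlen : (l ++ [w]).length = l.length + 1 := by simp
        rw [hlast, hlen, walkProd_concat]
        have h1 : α (l.getLastD x) w * mval α t init l.length (l.getLastD x) k ≤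
            mval α t init (l.length + 1) w k := by
          rw [hstep]
          exact le_sup_of_le_right
            (Finset.le_sup (f := fun v => α v w * mval α t init l.length v k)
              (Finset.mem_univ (l.getLastD x)))
        calc c * (walkProd α x l * α (l.getLastD x) w)
            = α (l.getLastD x) w * (c * walkProd α x l) := by ring
        _ ≤ α (l.getLastD x) w * mval α t init l.length (l.getLastD x) k :=
              mul_le_mul_right ih _
        _ ≤ _ := h1
  have hbddf : BddAbove (Set.range fun m : ℕ => mval α t init m u k) := by
    refine ⟨c, ?_⟩
    rintro _ ⟨m, rfl⟩
    exact hle m u k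
  refine le_antisymm (ciSup_le fun m => hup m u) ?_
  rw [NNReal.mul_iSup]
  refine ciSup_le fun l => ?_
  by_cases h : l.getLastD x = u
  · rw [if_pos h]
    exact le_trans (h ▸ hlow l) (le_ciSup hbddf l.length)
  · rw [if_neg h, mul_zero]
    exact zero_le
end
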